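/- There is a universal constant C such that the following holds. Let G be a strongly connected directed graph on vertices 1,…,N with diameter d, let Ω be a finite state space with full-support prior μ, let f : Ω → [0,1], and let Π_{1,0},…,Π_{N,0} be initial partitions of Ω. Then for all ε ∈ (0,1) and δ ∈ (0,1], after at most C·N·d²/(δε²) messages of the spanning-tree protocol on G, every pair of agents i, j satisfies μ({ω : |E_{i,t}(ω) − E_{j,t}(ω)| > ε}) ≤ δ. -/

import Mathlib

open scoped Classical BigOperators

/-- A partition of a finite type, given by the cell containing each point. -/
structure FinPartition (Ω : Type*) [Fintype Ω] [DecidableEq Ω] where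
  cell : Ω → Finset Ω
  mem_cell : ∀ ω, ω ∈ cell ω
  cell_eq : ∀ ω ω', ω' ∈ cell ω → cell ω' = cell ω

variable {Ω : Type*} [Fintype Ω] [DecidableEq Ω]

/-- Conditional expectation `E[g | S]` of `g` over `S` under the weights `μ`. -/
noncomputable def condExp (μ g : Ω → ℝ) (S : Finset Ω) : ℝ :=
  (∑ ω ∈ S, μ ω * g ω) / ∑ ω ∈ S, μ ω

/-- `E_P(ω) = E[f | P(ω)]`, the partition-conditional expectation of `f`. -/
noncomputable def expOn (μ f : Ω → ℝ) (P : FinPartition Ω) (ω : Ω) : ℝ :=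
  condExp μ f (P.cell ω)

/-- The cell `Θ_P(ω) = {ω' : E_P(ω') = E_P(ω)}` of the level-set partition of `E_P`. -/
noncomputable def levelCell (μ f : Ω → ℝ) (P : FinPartition Ω) (ω : Ω) : Finset Ω :=
  Finset.univ.filter fun ω' => expOn μ f P ω' = expOn μ f P ω

/-- `P` refines `Q`: every cell of `P` is contained in the corresponding cell of `Q`. -/
def FinPartition.Refines (P Q : FinPartition Ω) : Prop := ∀ ω, P.cell ω ⊆ Q.cell ω

/-- The squared 2-norm `‖F‖₂² = Σ_ω μ(ω) F(ω)²`. -/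
noncomputable def norm2 (μ F : Ω → ℝ) : ℝ := ∑ ω, μ ω * F ω ^ 2

/-- Refine a partition by intersecting each cell with the level sets of `g`. -/
noncomputable def FinPartition.refineBy {M : Type*} (R : FinPartition Ω) (g : Ω → M) :
    FinPartition Ω where
  cell ω := R.cell ω ∩ Finset.univ.filter fun ω' => g ω' = g ω
  mem_cell ω := by
    simp only [Finset.mem_inter, Finset.mem_filter, Finset.mem_univ, true_and]
    exact ⟨R.mem_cell ω, trivial⟩
  cell_eq := by
    intro ω ω' h
    simp only [Finset.mem_inter, Finset.mem_filter, Finset.mem_univ, true_and] at h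
    show R.cell ω' ∩ Finset.univ.filter (fun ω'' => g ω'' = g ω') =
      R.cell ω ∩ Finset.univ.filter (fun ω'' => g ω'' = g ω)
    rw [R.cell_eq ω ω' h.1, h.2]

/-- `reachIn G k u v`: there is a directed walk of length exactly `k` from `u` to `v`. -/
def reachIn {V : Type*} (G : V → V → Prop) : ℕ → V → V → Prop
  | 0, u, v => u = v
  | k + 1, u, v => ∃ w, G u w ∧ reachIn G k w v

/-- One agent sends its current expectation to another: the multi-agent protocol.
`multiStep μ f Pi0 sched t i` is agent `i`'s partition after `t` messages, where the
`(u+1)`-st message is sent along the directed edge `sched u`. -/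
noncomputable def multiStep {N : ℕ} (μ f : Ω → ℝ) (Pi0 : Fin N → FinPartition Ω)
    (sched : ℕ → Fin N × Fin N) : ℕ → Fin N → FinPartition Ω
  | 0 => Pi0
  | t + 1 => fun k =>
    let prev := multiStep μ f Pi0 sched t
    if k = (sched t).2 then (prev k).refineBy (expOn μ f (prev (sched t).1)) else prev k

set_option linter.unusedSectionVars false

section PartA

variable {Ω : Type} [Fintype Ω] [DecidableEq Ω]

lemma sum_mul_expOn (μ f : Ω → ℝ) (hμ : ∀ ω, 0 < μ ω) (P : FinPartition Ω) (h : Ω → ℝ)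
    (hh : ∀ ω ω', ω' ∈ P.cell ω → h ω' = h ω) :
    ∀ (S : Finset Ω), (∀ ω ∈ S, P.cell ω ⊆ S) →
      ∑ ω ∈ S, μ ω * (expOn μ f P ω * h ω) = ∑ ω ∈ S, μ ω * (f ω * h ω) := by
  intro S
  induction S using Finset.strongInduction with
  | _ S ih =>
    intro hS
    rcases S.eq_empty_or_nonempty with rfl | ⟨ω₀, hω₀⟩
    · simp
    · have hTS : P.cell ω₀ ⊆ S := hS ω₀ hω₀
      have hsub : S \ P.cell ω₀ ⊂ S :=
        Finset.sdiff_ssubset hTS ⟨ω₀, P.mem_cell ω₀⟩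
      have hclosed : ∀ ω ∈ S \ P.cell ω₀, P.cell ω ⊆ S \ P.cell ω₀ := by
        intro ω hω ω' hω'
        rw [Finset.mem_sdiff] at hω ⊢
        refine ⟨hS ω hω.1 hω', fun hmem => hω.2 ?_⟩
        have h1 : P.cell ω' = P.cell ω := P.cell_eq ω ω' hω'
        have h2 : P.cell ω' = P.cell ω₀ := P.cell_eq ω₀ ω' hmem
        rw [← h1.symm.trans h2]; exact P.mem_cell ω
      have hrec := ih (S \ P.cell ω₀) hsub hclosed
      have hcell : ∀ ω ∈ P.cell ω₀, P.cell ω = P.cell ω₀ := fun ω hω => P.cell_eq ω₀ ω hω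
      have hμpos : (0:ℝ) < ∑ ω ∈ P.cell ω₀, μ ω :=
        Finset.sum_pos (fun ω _ => hμ ω) ⟨ω₀, P.mem_cell ω₀⟩
      have hTpart : ∑ ω ∈ P.cell ω₀, μ ω * (expOn μ f P ω * h ω)
          = ∑ ω ∈ P.cell ω₀, μ ω * (f ω * h ω) := by
        have e1 : ∑ ω ∈ P.cell ω₀, μ ω * (expOn μ f P ω * h ω)
            = ∑ ω ∈ P.cell ω₀, μ ω * (condExp μ f (P.cell ω₀) * h ω₀) := by
          refine Finset.sum_congr rfl fun ω hω => ?_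
          rw [expOn, hcell ω hω, hh ω₀ ω hω]
        have e2 : ∑ ω ∈ P.cell ω₀, μ ω * (f ω * h ω)
            = ∑ ω ∈ P.cell ω₀, (μ ω * f ω) * h ω₀ := by
          refine Finset.sum_congr rfl fun ω hω => ?_
          rw [hh ω₀ ω hω]; ring
        rw [e1, e2, ← Finset.sum_mul, ← Finset.sum_mul, condExp]
        field_simp
      have hsplit := Finset.sum_sdiff (f := fun ω => μ ω * (expOn μ f P ω * h ω)) hTS
      have hsplit2 := Finset.sum_sdiff (f := fun ω => μ ω * (f ω * h ω)) hTS
      rw [← hsplit, ← hsplit2, hrec, hTpart]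

lemma expOn_const_on_cells (μ f : Ω → ℝ) (P : FinPartition Ω) :
    ∀ ω ω', ω' ∈ P.cell ω → expOn μ f P ω' = expOn μ f P ω := by
  intro ω ω' h; rw [expOn, expOn, P.cell_eq ω ω' h]

/-- Key identity: if `E_P` is constant on cells of `R` then
`‖E_R − E_P‖² = ‖E_R‖² − ‖E_P‖²`. -/
lemma norm2_sub_eq (μ f : Ω → ℝ) (hμ : ∀ ω, 0 < μ ω) (R P : FinPartition Ω)
    (hconst : ∀ ω ω', ω' ∈ R.cell ω → expOn μ f P ω' = expOn μ f P ω) :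
    norm2 μ (fun ω => expOn μ f R ω - expOn μ f P ω)
      = norm2 μ (expOn μ f R) - norm2 μ (expOn μ f P) := by
  have h1 : ∑ ω, μ ω * (expOn μ f R ω * expOn μ f P ω)
      = ∑ ω, μ ω * (f ω * expOn μ f P ω) :=
    sum_mul_expOn μ f hμ R (expOn μ f P) hconst Finset.univ (by simp)
  have h2 : ∑ ω, μ ω * (expOn μ f P ω * expOn μ f P ω)
      = ∑ ω, μ ω * (f ω * expOn μ f P ω) :=
    sum_mul_expOn μ f hμ P (expOn μ f P) (expOn_const_on_cells μ f P) Finset.univ (by simp)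
  have expand : norm2 μ (fun ω => expOn μ f R ω - expOn μ f P ω)
      - (norm2 μ (expOn μ f R) - norm2 μ (expOn μ f P))
      = 2 * (∑ ω, μ ω * (expOn μ f P ω * expOn μ f P ω))
        - 2 * (∑ ω, μ ω * (expOn μ f R ω * expOn μ f P ω)) := by
    simp only [norm2, ← Finset.sum_sub_distrib, Finset.mul_sum]
    exact Finset.sum_congr rfl fun ω _ => by ring
  have := expand
  rw [h1, h2] at this
  linarith

lemma norm2_nonneg (μ F : Ω → ℝ) (hμ : ∀ ω, 0 < μ ω) : 0 ≤ norm2 μ F :=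
  Finset.sum_nonneg fun ω _ => mul_nonneg (hμ ω).le (sq_nonneg _)

lemma expOn_mem_Icc (μ f : Ω → ℝ) (hμ : ∀ ω, 0 < μ ω)
    (hf : ∀ ω, f ω ∈ Set.Icc (0:ℝ) 1) (P : FinPartition Ω) (ω : Ω) :
    expOn μ f P ω ∈ Set.Icc (0:ℝ) 1 := by
  have hpos : (0:ℝ) < ∑ ω' ∈ P.cell ω, μ ω' :=
    Finset.sum_pos (fun ω' _ => hμ ω') ⟨ω, P.mem_cell ω⟩
  constructor
  · exact div_nonneg (Finset.sum_nonneg fun ω' _ =>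
      mul_nonneg (hμ ω').le (hf ω').1) hpos.le
  · rw [expOn, condExp, div_le_one hpos]
    refine Finset.sum_le_sum fun ω' _ => ?_
    calc μ ω' * f ω' ≤ μ ω' * 1 := by
          exact mul_le_mul_of_nonneg_left (hf ω').2 (hμ ω').le
      _ = μ ω' := mul_one _

lemma norm2_expOn_le_one (μ f : Ω → ℝ) (hμ : ∀ ω, 0 < μ ω) (hsum : (∑ ω, μ ω) = 1)
    (hf : ∀ ω, f ω ∈ Set.Icc (0:ℝ) 1) (P : FinPartition Ω) :
    norm2 μ (expOn μ f P) ≤ 1 := by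
  rw [← hsum, norm2]
  refine Finset.sum_le_sum fun ω _ => ?_
  have h := expOn_mem_Icc μ f hμ hf P ω
  calc μ ω * expOn μ f P ω ^ 2 ≤ μ ω * 1 :=
        mul_le_mul_of_nonneg_left (by nlinarith [h.1, h.2]) (hμ ω).le
    _ = μ ω := mul_one _

end PartA
section PartB

variable {Ω : Type} [Fintype Ω] [DecidableEq Ω] {N : ℕ}

lemma sqrt_compose_aux {x y S Δ₁ Δ₂ m m' : ℝ} (hm : 0 ≤ m) (hm' : 0 ≤ m')
    (hΔ₁ : 0 ≤ Δ₁) (hΔ₂ : 0 ≤ Δ₂) (hx0 : 0 ≤ x) (hy0 : 0 ≤ y)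
    (hx : x ≤ m * Δ₁) (hy : y ≤ m' * Δ₂) (hS : S ^ 2 ≤ x * y) :
    x + 2 * S + y ≤ (m + m') * (Δ₁ + Δ₂) := by
  set a := Real.sqrt x with ha
  set b := Real.sqrt y with hb
  have ha2 : a ^ 2 = x := Real.sq_sqrt hx0
  have hb2 : b ^ 2 = y := Real.sq_sqrt hy0
  have ha0 : 0 ≤ a := Real.sqrt_nonneg x
  have hb0 : 0 ≤ b := Real.sqrt_nonneg y
  have hSab : S ≤ a * b := by
    have h1 : S ≤ |S| := le_abs_self S
    have h2 : |S| = Real.sqrt (S ^ 2) := (Real.sqrt_sq_eq_abs S).symm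
    have h3 : Real.sqrt (S ^ 2) ≤ Real.sqrt (x * y) := Real.sqrt_le_sqrt hS
    have h4 : Real.sqrt (x * y) = a * b := Real.sqrt_mul hx0 y
    linarith
  have hcross : 2 * (a * b) ≤ m * Δ₂ + m' * Δ₁ := by
    have h1 : (2 * (a * b)) ^ 2 ≤ (m * Δ₂ + m' * Δ₁) ^ 2 := by
      have : (2 * (a * b)) ^ 2 = 4 * (x * y) := by rw [mul_pow, mul_pow, ha2, hb2]; ring
      nlinarith [mul_nonneg hm hΔ₁, mul_nonneg hm' hΔ₂, mul_nonneg (mul_nonneg hm hΔ₁) hy0,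
        sq_nonneg (m * Δ₂ - m' * Δ₁), mul_le_mul hx hy hy0 (mul_nonneg hm hΔ₁)]
    have h0 : 0 ≤ 2 * (a * b) := by positivity
    have h0' : 0 ≤ m * Δ₂ + m' * Δ₁ := by positivity
    exact le_of_sq_le_sq h1 h0'
  nlinarith [hSab]

end PartB
section PartC

variable {Ω : Type} [Fintype Ω] [DecidableEq Ω] {N : ℕ}

/-- Expectation of agent `k` at time `t` in the protocol. -/
noncomputable def Epro (μ f : Ω → ℝ) (Pi0 : Fin N → FinPartition Ω)
    (sched : ℕ → Fin N × Fin N) (t : ℕ) (k : Fin N) : Ω → ℝ :=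
  expOn μ f (multiStep μ f Pi0 sched t k)

/-- Potential of agent `k` at time `t`. -/
noncomputable def Phi (μ f : Ω → ℝ) (Pi0 : Fin N → FinPartition Ω)
    (sched : ℕ → Fin N × Fin N) (t : ℕ) (k : Fin N) : ℝ :=
  norm2 μ (Epro μ f Pi0 sched t k)

variable (μ f : Ω → ℝ) (Pi0 : Fin N → FinPartition Ω) (sched : ℕ → Fin N × Fin N)

lemma FinPartition.Refines.rfl' (P : FinPartition Ω) : P.Refines P := fun _ => le_rfl

lemma FinPartition.Refines.trans' {P Q R : FinPartition Ω} (h1 : P.Refines Q)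
    (h2 : Q.Refines R) : P.Refines R := fun ω => (h1 ω).trans (h2 ω)

lemma multiStep_succ (t : ℕ) (k : Fin N) :
    multiStep μ f Pi0 sched (t + 1) k =
      if k = (sched t).2 then
        (multiStep μ f Pi0 sched t k).refineBy
          (expOn μ f (multiStep μ f Pi0 sched t (sched t).1))
      else multiStep μ f Pi0 sched t k := rfl

lemma multiStep_refines_succ (t : ℕ) (k : Fin N) :
    (multiStep μ f Pi0 sched (t + 1) k).Refines (multiStep μ f Pi0 sched t k) := by
  rw [multiStep_succ]
  split
  · intro ω; exact Finset.inter_subset_left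
  · exact FinPartition.Refines.rfl' _

lemma multiStep_refines_le {t t' : ℕ} (h : t ≤ t') (k : Fin N) :
    (multiStep μ f Pi0 sched t' k).Refines (multiStep μ f Pi0 sched t k) := by
  induction t' with
  | zero => cases Nat.le_zero.mp h; exact FinPartition.Refines.rfl' _
  | succ n ih =>
    rcases Nat.lt_or_ge t (n + 1) with hlt | hge
    · exact (multiStep_refines_succ μ f Pi0 sched n k).trans' (ih (Nat.lt_succ_iff.mp hlt))
    · cases Nat.le_antisymm h hge; exact FinPartition.Refines.rfl' _

/-- After the message at step `c`, the sender's expectation at time `c` is constant on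
the receiver's cells at any later time. -/
lemma msg_const {c t' : ℕ} (h : c < t') :
    ∀ ω ω', ω' ∈ (multiStep μ f Pi0 sched t' (sched c).2).cell ω →
      Epro μ f Pi0 sched c (sched c).1 ω' = Epro μ f Pi0 sched c (sched c).1 ω := by
  intro ω ω' hω'
  have href := multiStep_refines_le μ f Pi0 sched (Nat.succ_le_of_lt h) (sched c).2
  have hmem := href ω hω'
  have hstep : multiStep μ f Pi0 sched (c + 1) (sched c).2
      = (multiStep μ f Pi0 sched c (sched c).2).refineBy
        (expOn μ f (multiStep μ f Pi0 sched c (sched c).1)) := by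
    rw [multiStep_succ]; simp
  rw [hstep] at hmem
  simp only [FinPartition.refineBy, Finset.mem_inter, Finset.mem_filter,
    Finset.mem_univ, true_and] at hmem
  exact hmem.2

/-- `chainP i t j s m`: agent `j`'s expectation at time `s` is linked to agent `i`'s
expectation at time `t` by an increasing chain of at most `m` messages. -/
def chainP (i : Fin N) (t : ℕ) (j : Fin N) (s : ℕ) (m : ℕ) : Prop :=
  norm2 μ (fun ω => Epro μ f Pi0 sched s j ω - Epro μ f Pi0 sched t i ω)
      ≤ (m : ℝ) * (Phi μ f Pi0 sched s j - Phi μ f Pi0 sched t i)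
    ∧ Phi μ f Pi0 sched t i ≤ Phi μ f Pi0 sched s j

variable (hμ : ∀ ω, 0 < μ ω)

include hμ

lemma norm2_sub_Epro_self {t t' : ℕ} (h : t ≤ t') (k : Fin N) :
    norm2 μ (fun ω => Epro μ f Pi0 sched t' k ω - Epro μ f Pi0 sched t k ω)
      = Phi μ f Pi0 sched t' k - Phi μ f Pi0 sched t k := by
  refine norm2_sub_eq μ f hμ _ _ ?_
  intro ω ω' hω'
  exact expOn_const_on_cells μ f _ ω ω' (multiStep_refines_le μ f Pi0 sched h k ω hω')

lemma chainP_self {t t' : ℕ} (h : t ≤ t') (k : Fin N) :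
    chainP μ f Pi0 sched k t k t' 1 := by
  have heq := norm2_sub_Epro_self μ f Pi0 sched hμ h k
  have hnn := norm2_nonneg μ
    (fun ω => Epro μ f Pi0 sched t' k ω - Epro μ f Pi0 sched t k ω) hμ
  constructor
  · rw [heq]; push_cast; linarith
  · linarith [heq ▸ hnn]

lemma chainP_msg {c t' : ℕ} (h : c < t') {i j : Fin N} (hs : sched c = (i, j)) :
    chainP μ f Pi0 sched i c j t' 1 := by
  have hconst := msg_const μ f Pi0 sched h (t' := t')
  rw [hs] at hconst
  have heq : norm2 μ (fun ω => Epro μ f Pi0 sched t' j ω - Epro μ f Pi0 sched c i ω)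
      = Phi μ f Pi0 sched t' j - Phi μ f Pi0 sched c i :=
    norm2_sub_eq μ f hμ _ _ hconst
  have hnn := norm2_nonneg μ
    (fun ω => Epro μ f Pi0 sched t' j ω - Epro μ f Pi0 sched c i ω) hμ
  constructor
  · rw [heq]; push_cast; linarith
  · linarith [heq ▸ hnn]

lemma chainP_comp {i j k : Fin N} {t s u m m' : ℕ}
    (h1 : chainP μ f Pi0 sched i t j s m) (h2 : chainP μ f Pi0 sched j s k u m') :
    chainP μ f Pi0 sched i t k u (m + m') := by
  obtain ⟨hx, hΔ₁⟩ := h1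
  obtain ⟨hy, hΔ₂⟩ := h2
  set F := fun ω => Epro μ f Pi0 sched s j ω - Epro μ f Pi0 sched t i ω with hF
  set G := fun ω => Epro μ f Pi0 sched u k ω - Epro μ f Pi0 sched s j ω with hG
  have hFG : ∀ ω, Epro μ f Pi0 sched u k ω - Epro μ f Pi0 sched t i ω = F ω + G ω := by
    intro ω; simp [hF, hG]
  have hx0 := norm2_nonneg μ F hμ
  have hy0 := norm2_nonneg μ G hμ
  -- cross term Cauchy–Schwarz
  have hcs : (∑ ω, μ ω * (F ω * G ω)) ^ 2 ≤ norm2 μ F * norm2 μ G := by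
    have h := Finset.sum_mul_sq_le_sq_mul_sq Finset.univ
      (fun ω => Real.sqrt (μ ω) * F ω) (fun ω => Real.sqrt (μ ω) * G ω)
    have e1 : ∀ ω : Ω, (Real.sqrt (μ ω) * F ω) * (Real.sqrt (μ ω) * G ω)
        = μ ω * (F ω * G ω) := by
      intro ω
      have h' : Real.sqrt (μ ω) * Real.sqrt (μ ω) = μ ω := Real.mul_self_sqrt (hμ ω).le
      calc (Real.sqrt (μ ω) * F ω) * (Real.sqrt (μ ω) * G ω)
          = (Real.sqrt (μ ω) * Real.sqrt (μ ω)) * (F ω * G ω) := by ring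
        _ = μ ω * (F ω * G ω) := by rw [h']
    have e2 : ∀ ω : Ω, (Real.sqrt (μ ω) * F ω) ^ 2 = μ ω * F ω ^ 2 := by
      intro ω; rw [mul_pow, Real.sq_sqrt (hμ ω).le]
    have e3 : ∀ ω : Ω, (Real.sqrt (μ ω) * G ω) ^ 2 = μ ω * G ω ^ 2 := by
      intro ω; rw [mul_pow, Real.sq_sqrt (hμ ω).le]
    simp only [norm2]
    calc (∑ ω, μ ω * (F ω * G ω)) ^ 2
        = (∑ ω, (Real.sqrt (μ ω) * F ω) * (Real.sqrt (μ ω) * G ω)) ^ 2 := by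
          rw [Finset.sum_congr rfl fun ω _ => (e1 ω).symm]
      _ ≤ (∑ ω, (Real.sqrt (μ ω) * F ω) ^ 2) * ∑ ω, (Real.sqrt (μ ω) * G ω) ^ 2 := h
      _ = (∑ ω, μ ω * F ω ^ 2) * ∑ ω, μ ω * G ω ^ 2 := by
          rw [Finset.sum_congr rfl fun ω _ => e2 ω, Finset.sum_congr rfl fun ω _ => e3 ω]
  have hexpand : norm2 μ (fun ω => Epro μ f Pi0 sched u k ω - Epro μ f Pi0 sched t i ω)
      = norm2 μ F + 2 * (∑ ω, μ ω * (F ω * G ω)) + norm2 μ G := by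
    simp only [norm2, Finset.mul_sum, ← Finset.sum_add_distrib]
    refine Finset.sum_congr rfl fun ω _ => ?_
    rw [hFG ω]; ring
  constructor
  · rw [hexpand]
    have := sqrt_compose_aux (m := (m:ℝ)) (m' := (m':ℝ))
      (Δ₁ := Phi μ f Pi0 sched s j - Phi μ f Pi0 sched t i)
      (Δ₂ := Phi μ f Pi0 sched u k - Phi μ f Pi0 sched s j)
      (by positivity) (by positivity) (by linarith) (by linarith) hx0 hy0 hx hy hcs
    push_cast
    linarith [this]
  · linarith

lemma chainP_mono {i j : Fin N} {t s m m' : ℕ} (h : chainP μ f Pi0 sched i t j s m)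
    (hm : m ≤ m') : chainP μ f Pi0 sched i t j s m' := by
  obtain ⟨h1, h2⟩ := h
  refine ⟨h1.trans ?_, h2⟩
  have : (m:ℝ) ≤ (m':ℝ) := Nat.cast_le.mpr hm
  nlinarith

lemma Phi_mono {t t' : ℕ} (h : t ≤ t') (k : Fin N) :
    Phi μ f Pi0 sched t k ≤ Phi μ f Pi0 sched t' k :=
  (chainP_self μ f Pi0 sched hμ h k).2

end PartC
section PartD

lemma reachIn_succ_iff {V : Type*} (G : V → V → Prop) :
    ∀ (k : ℕ) (u v : V), reachIn G (k + 1) u v ↔ ∃ w, reachIn G k u w ∧ G w v := by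
  intro k
  induction k with
  | zero =>
    intro u v
    constructor
    · rintro ⟨w, hw, hwv⟩
      have : w = v := hwv
      subst this; exact ⟨u, rfl, hw⟩
    · rintro ⟨w, hw, hG⟩
      have : u = w := hw
      subst this; exact ⟨v, hG, rfl⟩
  | succ k ih =>
    intro u v
    constructor
    · rintro ⟨w, hw, hr⟩
      obtain ⟨x, hx, hGx⟩ := (ih w v).mp hr
      exact ⟨x, ⟨w, hw, hx⟩, hGx⟩
    · rintro ⟨w, hw, hG⟩
      obtain ⟨z, hz, hrz⟩ := hw
      exact ⟨z, hz, (ih z v).mpr ⟨w, hrz, hG⟩⟩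

lemma filter_one_unique {α : Type*} (p : α → Prop) [DecidablePred p] :
    ∀ (l : List α), (l.filter (fun a => p a)).length = 1 →
      ∃ n, ∃ hn : n < l.length, p (l[n]'hn) ∧
        (∀ m (hm : m < l.length), p (l[m]'hm) → m = n) ∧
        (∀ x ∈ l, p x → x = l[n]'hn) := by
  intro l
  induction l with
  | nil => intro h; simp at h
  | cons a tl ih =>
    intro h
    by_cases hpa : p a
    · have hfil : (tl.filter (fun a => p a)).length = 0 := by
        rw [List.filter_cons_of_pos (by simpa using hpa)] at h
        simpa using h
      have hnot : ∀ x ∈ tl, ¬ p x := by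
        intro x hx hpx
        have hmem : x ∈ tl.filter (fun a => p a) :=
          List.mem_filter.mpr ⟨hx, by simpa using hpx⟩
        rw [List.length_eq_zero_iff.mp hfil] at hmem
        simp at hmem
      refine ⟨0, by simp, by simpa using hpa, ?_, ?_⟩
      · intro m hm hpm
        cases m with
        | zero => rfl
        | succ k =>
          have hklt : k < tl.length := by simpa using hm
          exact absurd (by simpa using hpm) (hnot (tl[k]'hklt) (List.getElem_mem hklt))
      · intro x hx hpx
        rcases List.mem_cons.mp hx with rfl | hx'
        · simp
        · exact absurd hpx (hnot x hx')
    · have hfil : (tl.filter (fun a => p a)).length = 1 := by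
        rw [List.filter_cons_of_neg (by simpa using hpa)] at h; exact h
      obtain ⟨n, hn, hp1, hp2, hp3⟩ := ih hfil
      refine ⟨n + 1, by simpa using hn, by simpa using hp1, ?_, ?_⟩
      · intro m hm hpm
        cases m with
        | zero => exact absurd (by simpa using hpm) hpa
        | succ k =>
          have := hp2 k (by simpa using hm) (by simpa using hpm)
          omega
      · intro x hx hpx
        rcases List.mem_cons.mp hx with rfl | hx'
        · exact absurd hpx hpa
        · simpa using hp3 x hx' hpx

lemma list_decomp {α : Type*} (l : List α) (n : ℕ) (hn : n < l.length) :
    l = l.take n ++ (l[n]'hn) :: l.drop (n + 1) := by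
  conv_lhs => rw [← List.take_append_drop n l]
  rw [List.drop_eq_getElem_cons hn]

lemma mem_take_idx {α : Type*} (l : List α) (n : ℕ) (x : α) (hx : x ∈ l.take n) :
    ∃ m, ∃ hm : m < l.length, m < n ∧ l[m]'hm = x := by
  obtain ⟨m, hm, hget⟩ := List.mem_iff_getElem.mp hx
  have hm' : m < n ∧ m < l.length := by
    rw [List.length_take] at hm; omega
  refine ⟨m, hm'.2, hm'.1, ?_⟩
  rw [← hget, List.getElem_take]

end PartD

section PartE

variable {Ω : Type} [Fintype Ω] [DecidableEq Ω] {N : ℕ}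

lemma reachIn_zero_iff {V : Type*} (G : V → V → Prop) (u v : V) :
    reachIn G 0 u v ↔ u = v := Iff.rfl

lemma reachIn_succ_iff' {V : Type*} (G : V → V → Prop) (k : ℕ) (u v : V) :
    reachIn G (k + 1) u v ↔ ∃ w, G u w ∧ reachIn G k w v := Iff.rfl

variable (μ f : Ω → ℝ) (Pi0 : Fin N → FinPartition Ω) (sched : ℕ → Fin N × Fin N)
variable (O₁ O₂ : List (Fin N × Fin N)) (root : Fin N)

/-- Down-phase chain: a chain of messages from the root to `v` within a single
`O₁`-block of the schedule. -/
lemma down_chain (hμ : ∀ ω, 0 < μ ω) (a : ℕ)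
    (hin : ∀ v : Fin N, v ≠ root → (O₁.filter (fun e => e.2 = v)).length = 1)
    (hprec : ∀ (l₁ : List (Fin N × Fin N)) (e : Fin N × Fin N) l₂,
      O₁ = l₁ ++ e :: l₂ → e.1 ≠ root → ∃ e' ∈ l₁, e'.2 = e.1)
    (hs1 : ∀ n (hn : n < O₁.length),
      sched (a * (O₁.length + O₂.length) + n) = O₁[n]'hn) :
    ∀ (k : ℕ) (v : Fin N), v ≠ root → reachIn (fun x y => (x, y) ∈ O₁) k root v →
      ∃ m ≤ k, ∃ σ, a * (O₁.length + O₂.length) ≤ σ ∧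
        σ ≤ a * (O₁.length + O₂.length) + O₁.length ∧
        ∃ nv, ∃ hnv : nv < O₁.length, (O₁[nv]'hnv).2 = v ∧
          ∀ s, a * (O₁.length + O₂.length) + nv < s →
            chainP μ f Pi0 sched root σ v s m := by
  intro k
  induction k with
  | zero =>
    intro v hv hr
    exact absurd ((reachIn_zero_iff _ root v).mp hr).symm hv
  | succ k ih =>
    intro v hv hr
    obtain ⟨u, hru, huv⟩ := (reachIn_succ_iff _ k root v).mp hr
    obtain ⟨nv, hnv, hp1, hp2, hp3⟩ := filter_one_unique (fun e => e.2 = v) O₁ (hin v hv)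
    have hedge : O₁[nv]'hnv = (u, v) := (hp3 (u, v) huv rfl).symm
    have hsched : sched (a * (O₁.length + O₂.length) + nv) = (u, v) := by
      rw [hs1 nv hnv, hedge]
    by_cases hu : u = root
    · subst hu
      refine ⟨1, by omega, a * (O₁.length + O₂.length) + nv, by omega, by omega,
        nv, hnv, hp1, ?_⟩
      intro s hs
      exact chainP_msg μ f Pi0 sched hμ hs hsched
    · obtain ⟨m, hm, σ, hσ1, hσ2, nu, hnu, hnu2, hch⟩ := ih u hu hru
      have hlt : nu < nv := by
        have hdecomp : O₁ = O₁.take nv ++ (O₁[nv]'hnv) :: O₁.drop (nv + 1) :=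
          list_decomp O₁ nv hnv
        obtain ⟨e', he'mem, he'2⟩ := hprec _ _ _ hdecomp (by rw [hedge]; exact hu)
        obtain ⟨m', hm', hm'lt, he'⟩ := mem_take_idx O₁ nv e' he'mem
        obtain ⟨nu', hnu', hq1, hq2, hq3⟩ :=
          filter_one_unique (fun e => e.2 = u) O₁ (hin u hu)
        have h1 : nu = nu' := hq2 nu hnu hnu2
        have he'target : (O₁[m']'hm').2 = u := by
          rw [he']
          rw [hedge] at he'2
          exact he'2
        have h2 : m' = nu' := hq2 m' hm' he'target
        omega
      refine ⟨m + 1, by omega, σ, hσ1, hσ2, nv, hnv, hp1, ?_⟩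
      intro s hs
      have hpre : chainP μ f Pi0 sched root σ u (a * (O₁.length + O₂.length) + nv) m :=
        hch _ (by omega)
      have hlink : chainP μ f Pi0 sched u (a * (O₁.length + O₂.length) + nv) v s 1 :=
        chainP_msg μ f Pi0 sched hμ hs hsched
      exact chainP_comp μ f Pi0 sched hμ hpre hlink

/-- Up-phase chain: a chain of messages from `v` to the root, starting at `v`'s send
in round `a` and ending within `k` further rounds. -/
lemma up_chain (hμ : ∀ ω, 0 < μ ω)
    (hout : ∀ v : Fin N, v ≠ root → (O₂.filter (fun e => e.1 = v)).length = 1)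
    (hs2 : ∀ (b n : ℕ) (hn : n < O₂.length),
      sched (b * (O₁.length + O₂.length) + O₁.length + n) = O₂[n]'hn) :
    ∀ (k : ℕ) (v : Fin N), v ≠ root → reachIn (fun x y => (x, y) ∈ O₂) k v root →
      ∃ nv, ∃ hnv : nv < O₂.length, (O₂[nv]'hnv).1 = v ∧
        ∃ m ≤ k, ∀ (a s : ℕ), (a + k) * (O₁.length + O₂.length) ≤ s →
          chainP μ f Pi0 sched v (a * (O₁.length + O₂.length) + O₁.length + nv)
            root s m := by
  intro k
  induction k with
  | zero =>
    intro v hv hr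
    exact absurd ((reachIn_zero_iff _ v root).mp hr) hv
  | succ k ih =>
    intro v hv hr
    obtain ⟨w, hvw, hwr⟩ := (reachIn_succ_iff' _ k v root).mp hr
    obtain ⟨nv, hnv, hq1, hq2, hq3⟩ := filter_one_unique (fun e => e.1 = v) O₂ (hout v hv)
    have hedge : O₂[nv]'hnv = (v, w) := (hq3 (v, w) hvw rfl).symm
    have hsched : ∀ b : ℕ,
        sched (b * (O₁.length + O₂.length) + O₁.length + nv) = (v, w) := fun b => by
      rw [hs2 b nv hnv, hedge]
    by_cases hw : w = root
    · subst hw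
      refine ⟨nv, hnv, hq1, 1, by omega, ?_⟩
      intro a s hs
      have hmul : (a + 1) * (O₁.length + O₂.length)
          ≤ (a + (k + 1)) * (O₁.length + O₂.length) :=
        Nat.mul_le_mul_right _ (by omega)
      have hexp : (a + 1) * (O₁.length + O₂.length)
          = a * (O₁.length + O₂.length) + O₁.length + O₂.length := by ring
      exact chainP_msg μ f Pi0 sched hμ (by omega) (hsched a)
    · obtain ⟨nw, hnw, hw1, m, hm, hch⟩ := ih w hw hwr
      refine ⟨nv, hnv, hq1, 1 + m, by omega, ?_⟩
      intro a s hs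
      have hb : ∃ b : ℕ, b ≤ a + 1 ∧
          a * (O₁.length + O₂.length) + O₁.length + nv
            < b * (O₁.length + O₂.length) + O₁.length + nw := by
        by_cases h : nv < nw
        · exact ⟨a, by omega, by omega⟩
        · refine ⟨a + 1, le_rfl, ?_⟩
          have hexp : (a + 1) * (O₁.length + O₂.length)
              = a * (O₁.length + O₂.length) + O₁.length + O₂.length := by ring
          omega
      obtain ⟨b, hble, hblt⟩ := hb
      have hge : (b + k) * (O₁.length + O₂.length) ≤ s := by
        have hmul : (b + k) * (O₁.length + O₂.length)
            ≤ (a + (k + 1)) * (O₁.length + O₂.length) :=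
          Nat.mul_le_mul_right _ (by omega)
        omega
      have hpre : chainP μ f Pi0 sched v (a * (O₁.length + O₂.length) + O₁.length + nv)
          w (b * (O₁.length + O₂.length) + O₁.length + nw) 1 :=
        chainP_msg μ f Pi0 sched hμ hblt (hsched a)
      have htail := hch b s hge
      exact chainP_comp μ f Pi0 sched hμ hpre htail

end PartE

section PartF

variable {Ω : Type} [Fintype Ω] [DecidableEq Ω] {N : ℕ}

lemma norm2_sub_comm (μ A B : Ω → ℝ) :
    norm2 μ (fun ω => A ω - B ω) = norm2 μ (fun ω => B ω - A ω) := by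
  unfold norm2; exact Finset.sum_congr rfl fun ω _ => by ring

lemma norm2_add3_le (μ : Ω → ℝ) (hμ : ∀ ω, 0 < μ ω) (A B C : Ω → ℝ) :
    norm2 μ (fun ω => A ω + B ω + C ω)
      ≤ 3 * (norm2 μ A + norm2 μ B + norm2 μ C) := by
  unfold norm2
  rw [mul_add, mul_add, Finset.mul_sum, Finset.mul_sum, Finset.mul_sum,
    ← Finset.sum_add_distrib, ← Finset.sum_add_distrib]
  refine Finset.sum_le_sum fun ω _ => ?_
  have h := (hμ ω).le
  have hb : (fun ω => A ω + B ω + C ω) ω = A ω + B ω + C ω := rfl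
  rw [hb]
  nlinarith [mul_nonneg h (sq_nonneg (A ω - B ω)), mul_nonneg h (sq_nonneg (B ω - C ω)),
    mul_nonneg h (sq_nonneg (A ω - C ω))]

lemma Phi_nonneg (μ f : Ω → ℝ) (Pi0 : Fin N → FinPartition Ω)
    (sched : ℕ → Fin N × Fin N) (hμ : ∀ ω, 0 < μ ω) (t : ℕ) (k : Fin N) :
    0 ≤ Phi μ f Pi0 sched t k := norm2_nonneg μ _ hμ

lemma Phi_le_one (μ f : Ω → ℝ) (Pi0 : Fin N → FinPartition Ω)
    (sched : ℕ → Fin N × Fin N) (hμ : ∀ ω, 0 < μ ω) (hsum : (∑ ω, μ ω) = 1)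
    (hf : ∀ ω, f ω ∈ Set.Icc (0:ℝ) 1) (t : ℕ) (k : Fin N) :
    Phi μ f Pi0 sched t k ≤ 1 :=
  norm2_expOn_le_one μ f hμ hsum hf _

end PartF
set_option maxHeartbeats 2000000

/-- the spanning-tree protocol brings all `N` agents within `ε` of each
other with probability `1 - δ` after `O(N d² / (δ ε²))` messages. -/
theorem stmt_9 :
    ∃ C : ℝ, 0 < C ∧
      ∀ (Ω : Type) (_ : Fintype Ω) (_ : DecidableEq Ω) (_ : Nonempty Ω)
        (μ f : Ω → ℝ), (∀ ω, 0 < μ ω) → (∑ ω, μ ω) = 1 →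
        (∀ ω, f ω ∈ Set.Icc (0 : ℝ) 1) →
        ∀ (N : ℕ) (hN : 0 < N) (G : Fin N → Fin N → Prop) (d : ℕ),
        -- `G` is strongly connected with diameter (at most) `d`:
        (∀ u v : Fin N, ∃ k ≤ d, reachIn G k u v) →
        ∀ (O₁ O₂ : List (Fin N × Fin N)),
        -- the edges of the spanning trees are edges of `G`:
        (∀ e ∈ O₁, G e.1 e.2) → (∀ e ∈ O₂, G e.1 e.2) →
        -- `O₁` lists the `N - 1` edges of a spanning tree `T₁` directed away from the
        -- root (agent `1`): every non-root vertex has exactly one incoming edge: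
        O₁.length = N - 1 →
        (∀ v : Fin N, v ≠ ⟨0, hN⟩ → (O₁.filter (fun e => e.2 = v)).length = 1) →
        -- `O₂` lists the `N - 1` edges of a spanning tree `T₂` directed toward the
        -- root: every non-root vertex has exactly one outgoing edge:
        O₂.length = N - 1 →
        (∀ v : Fin N, v ≠ ⟨0, hN⟩ → (O₂.filter (fun e => e.1 = v)).length = 1) →
        -- each tree has depth at most `d` (they have minimum diameter):
        (∀ v : Fin N, ∃ k ≤ d, reachIn (fun a b => (a, b) ∈ O₁) k ⟨0, hN⟩ v) →
        (∀ v : Fin N, ∃ k ≤ d, reachIn (fun a b => (a, b) ∈ O₂) k v ⟨0, hN⟩) →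
        -- in `O₁`, every edge originating at a non-root vertex `i` is preceded by an
        -- edge terminating at `i`:
        (∀ (l₁ : List (Fin N × Fin N)) (e : Fin N × Fin N) (l₂ : List (Fin N × Fin N)),
          O₁ = l₁ ++ e :: l₂ → e.1 ≠ ⟨0, hN⟩ → ∃ e' ∈ l₁, e'.2 = e.1) →
        -- in `O₂`, every edge originating at a non-leaf vertex `i` of `T₂` is preceded
        -- by an edge terminating at `i`:
        (∀ (l₁ : List (Fin N × Fin N)) (e : Fin N × Fin N) (l₂ : List (Fin N × Fin N)),
          O₂ = l₁ ++ e :: l₂ → (∃ e'' ∈ O₂, e''.2 = e.1) → ∃ e' ∈ l₁, e'.2 = e.1) →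
        ∀ (Pi0 : Fin N → FinPartition Ω) (ε δ : ℝ),
          ε ∈ Set.Ioo (0 : ℝ) 1 → δ ∈ Set.Ioc (0 : ℝ) 1 →
          -- the messages are sent along edges in the repeating order O₁, O₂, O₁, O₂, …
          ∃ t : ℕ, (t : ℝ) ≤ C * N * d ^ 2 / (δ * ε ^ 2) ∧
            ∀ i j : Fin N,
              ∑ ω ∈ Finset.univ.filter (fun ω =>
                  ε < |expOn μ f (multiStep μ f Pi0
                        (fun u => (O₁ ++ O₂).getD (u % (O₁ ++ O₂).length) (⟨0, hN⟩, ⟨0, hN⟩)) t i) ω -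
                      expOn μ f (multiStep μ f Pi0
                        (fun u => (O₁ ++ O₂).getD (u % (O₁ ++ O₂).length) (⟨0, hN⟩, ⟨0, hN⟩)) t j) ω|),
                μ ω ≤ δ := by
  refine ⟨40, by norm_num, ?_⟩
  intro Ω _ _ _ μ f hμ hsum hf N hN G d hconn O₁ O₂ hG1 hG2 hlen1 hin hlen2 hout
    htree₁ htree₂ hprec₁ hprec₂ Pi0 ε δ hε hδ
  have hεpos : (0:ℝ) < ε := hε.1
  have hδpos : (0:ℝ) < δ := hδ.1
  set root : Fin N := ⟨0, hN⟩ with hroot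
  set sched : ℕ → Fin N × Fin N :=
    fun u => (O₁ ++ O₂).getD (u % (O₁ ++ O₂).length) (root, root) with hsched_def
  rcases Nat.lt_or_ge N 2 with hN1 | hN2
  · -- trivial case `N = 1`
    have hN1' : N = 1 := by omega
    refine ⟨0, by push_cast; positivity, ?_⟩
    intro i j
    have hij : i = j := by subst hN1'; exact Subsingleton.elim i j
    subst hij
    have hempty : ∀ ω : Ω, ¬ (ε < |expOn μ f (multiStep μ f Pi0 sched 0 i) ω -
        expOn μ f (multiStep μ f Pi0 sched 0 i) ω|) := by
      intro ω; rw [sub_self, abs_zero]; linarith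
    rw [Finset.filter_false_of_mem (fun ω _ => hempty ω)]
    simpa using hδpos.le
  · -- main case `N ≥ 2`
    have hL1 : O₁.length = N - 1 := hlen1
    have hL2 : O₂.length = N - 1 := hlen2
    have hL1pos : 1 ≤ O₁.length := by omega
    have hL2pos : 1 ≤ O₂.length := by omega
    have hd1 : 1 ≤ d := by
      obtain ⟨k, hk, hr⟩ := hconn ⟨0, by omega⟩ ⟨1, by omega⟩
      rcases k with _ | k
      · have := (reachIn_zero_iff G _ _).mp hr
        simp [Fin.ext_iff] at this
      · omega
    have hlenapp : (O₁ ++ O₂).length = O₁.length + O₂.length := List.length_append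
    -- schedule lemmas
    have hs1 : ∀ (a n : ℕ) (hn : n < O₁.length),
        sched (a * (O₁.length + O₂.length) + n) = O₁[n]'hn := by
      intro a n hn
      have hmod : (a * (O₁.length + O₂.length) + n) % (O₁ ++ O₂).length = n := by
        rw [hlenapp, Nat.mul_comm a (O₁.length + O₂.length), Nat.mul_add_mod]
        exact Nat.mod_eq_of_lt (by omega)
      show (O₁ ++ O₂).getD _ (root, root) = _
      rw [hmod, List.getD_eq_getElem _ _ (by rw [hlenapp]; omega),
        List.getElem_append_left hn]
    have hs2 : ∀ (b n : ℕ) (hn : n < O₂.length),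
        sched (b * (O₁.length + O₂.length) + O₁.length + n) = O₂[n]'hn := by
      intro b n hn
      have harr : b * (O₁.length + O₂.length) + O₁.length + n
          = b * (O₁.length + O₂.length) + (O₁.length + n) := by omega
      have hmod : (b * (O₁.length + O₂.length) + (O₁.length + n)) % (O₁ ++ O₂).length
          = O₁.length + n := by
        rw [hlenapp, Nat.mul_comm b (O₁.length + O₂.length), Nat.mul_add_mod]
        exact Nat.mod_eq_of_lt (by omega)
      show (O₁ ++ O₂).getD _ (root, root) = _
      rw [harr, hmod, List.getD_eq_getElem _ _ (by rw [hlenapp]; omega),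
        List.getElem_append_right (by omega)]
      congr 1
      omega
    -- window machinery
    set B : ℕ → ℕ := fun k => k * (d + 1) * (O₁.length + O₂.length) with hB
    set γ : ℝ := δ * ε ^ 2 / (9 * d) with hγ
    have hd0R : (0:ℝ) < (d:ℝ) := by exact_mod_cast hd1
    have hd1R : (1:ℝ) ≤ (d:ℝ) := by exact_mod_cast hd1
    have hγpos : 0 < γ := by
      apply div_pos (by positivity) (by positivity)
    set K : ℕ := ⌊(9 * (d:ℝ)) / (δ * ε ^ 2)⌋₊ + 1 with hK
    have hBmono : ∀ k k', k ≤ k' → B k ≤ B k' := by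
      intro k k' h
      exact Nat.mul_le_mul_right _ (Nat.mul_le_mul_right _ h)
    have hgood : ∃ k0 < K,
        Phi μ f Pi0 sched (B (k0 + 1)) root - Phi μ f Pi0 sched (B k0) root ≤ γ := by
      by_contra hcon
      push_neg at hcon
      have htel : ∑ k ∈ Finset.range K,
          (Phi μ f Pi0 sched (B (k + 1)) root - Phi μ f Pi0 sched (B k) root)
          = Phi μ f Pi0 sched (B K) root - Phi μ f Pi0 sched (B 0) root :=
        Finset.sum_range_sub (fun k => Phi μ f Pi0 sched (B k) root) K
      have hlt : (K : ℝ) * γ < ∑ k ∈ Finset.range K,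
          (Phi μ f Pi0 sched (B (k + 1)) root - Phi μ f Pi0 sched (B k) root) := by
        have := Finset.sum_lt_sum_of_nonempty (s := Finset.range K)
          (by simp [hK]) (f := fun _ => γ)
          (g := fun k => Phi μ f Pi0 sched (B (k + 1)) root - Phi μ f Pi0 sched (B k) root)
          (fun k hk => hcon k (Finset.mem_range.mp hk))
        simpa [Finset.sum_const, Finset.card_range, nsmul_eq_mul] using this
      have hub : Phi μ f Pi0 sched (B K) root - Phi μ f Pi0 sched (B 0) root ≤ 1 := by
        have h1 := Phi_le_one μ f Pi0 sched hμ hsum hf (B K) root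
        have h2 := Phi_nonneg μ f Pi0 sched hμ (B 0) root
        linarith
      have hKx : (9 * (d:ℝ)) / (δ * ε ^ 2) < (K : ℝ) := by
        have := Nat.lt_floor_add_one ((9 * (d:ℝ)) / (δ * ε ^ 2))
        rw [hK]; push_cast; linarith
      have h1K : 1 < (K:ℝ) * γ := by
        have hxγ : (9 * (d:ℝ)) / (δ * ε ^ 2) * γ = 1 := by
          rw [hγ]; field_simp
        calc (1:ℝ) = (9 * (d:ℝ)) / (δ * ε ^ 2) * γ := hxγ.symm
          _ < (K:ℝ) * γ := by
            apply mul_lt_mul_of_pos_right hKx hγpos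
      linarith
    obtain ⟨k0, hk0K, hD⟩ := hgood
    set a₀ : ℕ := k0 * (d + 1) with ha₀
    set t : ℕ := a₀ * (O₁.length + O₂.length) + O₁.length with ht
    set Dp : ℝ := Phi μ f Pi0 sched (B (k0 + 1)) root - Phi μ f Pi0 sched (B k0) root
      with hDp
    have hBk0 : B k0 = a₀ * (O₁.length + O₂.length) := by simp only [hB, ha₀]
    have hDp0 : 0 ≤ Dp := by
      have := Phi_mono μ f Pi0 sched hμ (hBmono k0 (k0 + 1) (by omega)) root
      rw [hDp]; linarith
    have htB : t ≤ B (k0 + 1) := by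
      have h1 : B (k0 + 1) = a₀ * (O₁.length + O₂.length) + (d + 1) * (O₁.length + O₂.length) := by
        simp only [hB, ha₀]; ring
      have h2 : (O₁.length + O₂.length) ≤ (d + 1) * (O₁.length + O₂.length) :=
        Nat.le_mul_of_pos_left _ (by omega)
      rw [h1, ht]
      omega
    -- down chains to every vertex
    have hdownAll : ∀ v : Fin N, ∃ σ, B k0 ≤ σ ∧ σ ≤ B k0 + O₁.length ∧
        chainP μ f Pi0 sched root σ v t d := by
      intro v
      by_cases hv : v = root
      · subst hv
        refine ⟨B k0, le_rfl, by omega, ?_⟩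
        exact chainP_mono μ f Pi0 sched hμ
          (chainP_self μ f Pi0 sched hμ (by rw [hBk0, ht]; omega) root) hd1
      · obtain ⟨k, hk, hr⟩ := htree₁ v
        obtain ⟨m, hm, σ, hσ1, hσ2, nv, hnv, _, hch⟩ :=
          down_chain μ f Pi0 sched O₁ O₂ root hμ a₀ hin hprec₁ (hs1 a₀) k v hv hr
        refine ⟨σ, ?_, ?_, ?_⟩
        · rw [hBk0]; exact hσ1
        · rw [hBk0]; exact hσ2
        · exact chainP_mono μ f Pi0 sched hμ (hch t (by rw [ht]; omega)) (hm.trans hk)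
    -- upper bound on potentials at time `t`
    have hupAll : ∀ v : Fin N, Phi μ f Pi0 sched t v ≤ Phi μ f Pi0 sched (B (k0 + 1)) root := by
      intro v
      by_cases hv : v = root
      · subst hv; exact Phi_mono μ f Pi0 sched hμ htB root
      · obtain ⟨k, hk, hr⟩ := htree₂ v
        obtain ⟨nv, hnv, _, m, hm, hch⟩ :=
          up_chain μ f Pi0 sched O₁ O₂ root hμ hout hs2 k v hv hr
        have hge : (a₀ + k) * (O₁.length + O₂.length) ≤ B (k0 + 1) := by
          have hexp : (k0 + 1) * (d + 1) = k0 * (d + 1) + d + 1 := by ring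
          have h1 : a₀ + k ≤ (k0 + 1) * (d + 1) := by rw [hexp, ha₀]; omega
          have h2 : (a₀ + k) * (O₁.length + O₂.length)
              ≤ ((k0 + 1) * (d + 1)) * (O₁.length + O₂.length) := Nat.mul_le_mul_right _ h1
          simpa only [hB] using h2
        have hchain := hch a₀ (B (k0 + 1)) hge
        have h1 : Phi μ f Pi0 sched t v ≤ Phi μ f Pi0 sched (a₀ * (O₁.length + O₂.length) + O₁.length + nv) v :=
          Phi_mono μ f Pi0 sched hμ (by rw [ht]; omega) v
        exact h1.trans hchain.2
    -- pairwise disagreement bound at time `t`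
    have hpair : ∀ i j : Fin N,
        norm2 μ (fun ω => Epro μ f Pi0 sched t i ω - Epro μ f Pi0 sched t j ω)
          ≤ δ * ε ^ 2 := by
      intro i j
      obtain ⟨σi, hσi1, hσi2, hchi⟩ := hdownAll i
      obtain ⟨σj, hσj1, hσj2, hchj⟩ := hdownAll j
      have hσPhi : ∀ σ, B k0 ≤ σ → σ ≤ B k0 + O₁.length →
          Phi μ f Pi0 sched (B k0) root ≤ Phi μ f Pi0 sched σ root ∧
          Phi μ f Pi0 sched σ root ≤ Phi μ f Pi0 sched (B (k0 + 1)) root := by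
        intro σ h1 h2
        constructor
        · exact Phi_mono μ f Pi0 sched hμ h1 root
        · refine Phi_mono μ f Pi0 sched hμ ?_ root
          have : B k0 + O₁.length ≤ t := by rw [ht, hBk0]
          omega
      have hσi := hσPhi σi hσi1 hσi2
      have hσj := hσPhi σj hσj1 hσj2
      have hA : norm2 μ (fun ω => Epro μ f Pi0 sched t i ω - Epro μ f Pi0 sched σi root ω)
          ≤ (d:ℝ) * Dp := by
        refine hchi.1.trans ?_
        have h1 : Phi μ f Pi0 sched t i - Phi μ f Pi0 sched σi root ≤ Dp := by
          have := hupAll i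
          rw [hDp]; linarith [hσi.1]
        have h2 : (0:ℝ) ≤ (d:ℝ) := hd0R.le
        nlinarith
      have hC : norm2 μ (fun ω => Epro μ f Pi0 sched σj root ω - Epro μ f Pi0 sched t j ω)
          ≤ (d:ℝ) * Dp := by
        rw [norm2_sub_comm]
        refine hchj.1.trans ?_
        have h1 : Phi μ f Pi0 sched t j - Phi μ f Pi0 sched σj root ≤ Dp := by
          have := hupAll j
          rw [hDp]; linarith [hσj.1]
        have h2 : (0:ℝ) ≤ (d:ℝ) := hd0R.le
        nlinarith
      have hBmid : norm2 μ (fun ω => Epro μ f Pi0 sched σi root ω -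
          Epro μ f Pi0 sched σj root ω) ≤ Dp := by
        rcases le_total σi σj with hle | hle
        · rw [norm2_sub_comm]
          rw [norm2_sub_Epro_self μ f Pi0 sched hμ hle root]
          rw [hDp]; linarith [hσi.1, hσj.2]
        · rw [norm2_sub_Epro_self μ f Pi0 sched hμ hle root]
          rw [hDp]; linarith [hσj.1, hσi.2]
      have hsplit : norm2 μ (fun ω => Epro μ f Pi0 sched t i ω - Epro μ f Pi0 sched t j ω)
          = norm2 μ (fun ω =>
              (Epro μ f Pi0 sched t i ω - Epro μ f Pi0 sched σi root ω)
              + (Epro μ f Pi0 sched σi root ω - Epro μ f Pi0 sched σj root ω)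
              + (Epro μ f Pi0 sched σj root ω - Epro μ f Pi0 sched t j ω)) := by
        unfold norm2
        exact Finset.sum_congr rfl fun ω _ => by ring
      rw [hsplit]
      have h3 := norm2_add3_le μ hμ
        (fun ω => Epro μ f Pi0 sched t i ω - Epro μ f Pi0 sched σi root ω)
        (fun ω => Epro μ f Pi0 sched σi root ω - Epro μ f Pi0 sched σj root ω)
        (fun ω => Epro μ f Pi0 sched σj root ω - Epro μ f Pi0 sched t j ω)
      have h4 : 3 * (((d:ℝ) * Dp) + Dp + ((d:ℝ) * Dp)) ≤ 9 * (d:ℝ) * Dp := by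
        nlinarith [mul_nonneg (sub_nonneg.mpr hd1R) hDp0]
      have h5 : 9 * (d:ℝ) * Dp ≤ 9 * (d:ℝ) * γ := by
        have h9 : (0:ℝ) ≤ 9 * (d:ℝ) := by positivity
        calc 9 * (d:ℝ) * Dp = 9 * (d:ℝ) * Dp := rfl
          _ ≤ 9 * (d:ℝ) * γ := mul_le_mul_of_nonneg_left hD h9
      have h6 : 9 * (d:ℝ) * γ = δ * ε ^ 2 := by
        rw [hγ]; field_simp
      linarith
    refine ⟨t, ?_, ?_⟩
    · -- the time bound
      have hKfloor : (K:ℝ) ≤ 9 * (d:ℝ) / (δ * ε ^ 2) + 1 := by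
        rw [hK]; push_cast
        have := Nat.floor_le (R := ℝ) (a := 9 * (d:ℝ) / (δ * ε ^ 2)) (by positivity)
        linarith
      have hδε1 : δ * ε ^ 2 ≤ 1 := by nlinarith [hε.2, hδ.2, hεpos, hδpos]
      have hdge : (1:ℝ) ≤ (d:ℝ) := by exact_mod_cast hd1
      have hx9 : 9 * (d:ℝ) / (δ * ε ^ 2) + 1 ≤ 10 * (d:ℝ) / (δ * ε ^ 2) := by
        have h1 : (1:ℝ) ≤ (d:ℝ) / (δ * ε ^ 2) := by
          rw [le_div_iff₀ (by positivity)]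
          linarith
        have h2 : 10 * (d:ℝ) / (δ * ε ^ 2) = 9 * (d:ℝ) / (δ * ε ^ 2) + (d:ℝ) / (δ * ε ^ 2) := by
          ring
        linarith
      have htK : t ≤ K * (d + 1) * (O₁.length + O₂.length) := by
        have h1 : t ≤ (k0 + 1) * (d + 1) * (O₁.length + O₂.length) := by
          have hexp : (k0 + 1) * (d + 1) * (O₁.length + O₂.length) = a₀ * (O₁.length + O₂.length) + (d + 1) * (O₁.length + O₂.length) := by
            rw [ha₀]; ring
          have h2 : O₁.length ≤ (d + 1) * (O₁.length + O₂.length) := by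
            have : (O₁.length + O₂.length) ≤ (d + 1) * (O₁.length + O₂.length) := Nat.le_mul_of_pos_left _ (by omega)
            omega
          rw [ht, hexp]; omega
        refine h1.trans ?_
        exact Nat.mul_le_mul_right _ (Nat.mul_le_mul_right _ hk0K)
      have hLN : ((O₁.length + O₂.length : ℕ) : ℝ) ≤ 2 * (N : ℝ) := by
        have : (O₁.length + O₂.length) ≤ 2 * N := by omega
        exact_mod_cast this
      have hd2 : ((d:ℝ) + 1) ≤ 2 * (d:ℝ) := by linarith
      have htR : (t:ℝ) ≤ (K:ℝ) * ((d:ℝ) + 1) * ((O₁.length + O₂.length : ℕ):ℝ) := by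
        exact_mod_cast htK
      have hKpos : (0:ℝ) ≤ (K:ℝ) := Nat.cast_nonneg K
      have hLpos : (0:ℝ) ≤ ((O₁.length + O₂.length : ℕ):ℝ) := Nat.cast_nonneg _
      have hNpos : (0:ℝ) ≤ (N:ℝ) := Nat.cast_nonneg N
      have hstep1 : (K:ℝ) * ((d:ℝ) + 1) * ((O₁.length + O₂.length : ℕ):ℝ)
          ≤ (10 * (d:ℝ) / (δ * ε ^ 2)) * (2 * (d:ℝ)) * (2 * (N:ℝ)) := by
        have hKb : (K:ℝ) ≤ 10 * (d:ℝ) / (δ * ε ^ 2) := hKfloor.trans hx9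
        have hb1 : (K:ℝ) * ((d:ℝ) + 1) ≤ (10 * (d:ℝ) / (δ * ε ^ 2)) * (2 * (d:ℝ)) :=
          mul_le_mul hKb hd2 (by linarith) (by positivity)
        exact mul_le_mul hb1 hLN hLpos (by positivity)
      have hfinal : (10 * (d:ℝ) / (δ * ε ^ 2)) * (2 * (d:ℝ)) * (2 * (N:ℝ))
          = 40 * (N:ℝ) * (d:ℝ) ^ 2 / (δ * ε ^ 2) := by
        field_simp; ring
      have hT := htR.trans hstep1
      rw [hfinal] at hT
      exact hT
    · -- the agreement bound via Chebyshev
      intro i j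
      have hp := hpair i j
      have hchb : ε ^ 2 * ∑ ω ∈ Finset.univ.filter (fun ω =>
          ε < |Epro μ f Pi0 sched t i ω - Epro μ f Pi0 sched t j ω|), μ ω
          ≤ δ * ε ^ 2 := by
        have step1 : ∑ ω ∈ Finset.univ.filter (fun ω =>
            ε < |Epro μ f Pi0 sched t i ω - Epro μ f Pi0 sched t j ω|), ε ^ 2 * μ ω
            ≤ ∑ ω ∈ Finset.univ.filter (fun ω =>
            ε < |Epro μ f Pi0 sched t i ω - Epro μ f Pi0 sched t j ω|),
              μ ω * (Epro μ f Pi0 sched t i ω - Epro μ f Pi0 sched t j ω) ^ 2 := by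
          refine Finset.sum_le_sum fun ω hω => ?_
          have hω' := (Finset.mem_filter.mp hω).2
          have h1 : ε ^ 2 ≤ (Epro μ f Pi0 sched t i ω - Epro μ f Pi0 sched t j ω) ^ 2 := by
            have h2 : ε ≤ |Epro μ f Pi0 sched t i ω - Epro μ f Pi0 sched t j ω| := hω'.le
            calc ε ^ 2 ≤ |Epro μ f Pi0 sched t i ω - Epro μ f Pi0 sched t j ω| ^ 2 := by
                  exact pow_le_pow_left₀ hεpos.le h2 2
              _ = (Epro μ f Pi0 sched t i ω - Epro μ f Pi0 sched t j ω) ^ 2 := sq_abs _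
          nlinarith [(hμ ω).le]
        have step2 : ∑ ω ∈ Finset.univ.filter (fun ω =>
            ε < |Epro μ f Pi0 sched t i ω - Epro μ f Pi0 sched t j ω|),
              μ ω * (Epro μ f Pi0 sched t i ω - Epro μ f Pi0 sched t j ω) ^ 2
            ≤ norm2 μ (fun ω => Epro μ f Pi0 sched t i ω - Epro μ f Pi0 sched t j ω) := by
          refine Finset.sum_le_sum_of_subset_of_nonneg (Finset.filter_subset _ _) ?_
          intro ω _ _
          exact mul_nonneg (hμ ω).le (sq_nonneg _)
        rw [Finset.mul_sum]
        exact (step1.trans step2).trans hp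
      have hsum' : ∑ ω ∈ Finset.univ.filter (fun ω =>
          ε < |Epro μ f Pi0 sched t i ω - Epro μ f Pi0 sched t j ω|), μ ω ≤ δ := by
        have hε2 : (0:ℝ) < ε ^ 2 := by positivity
        nlinarith [hchb]
      exact hsum'
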